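/- (Explicit Møller addition formula.) Let E be a real inner product space, M = ℝ × E with Minkowski form B and chronor T = (1,0). Let u, v ∈ E with ‖v‖ < 1, δ = √(1 − ‖v‖²), and 1 + ⟪v,u⟫ ≠ 0. With ξ_v(u) = ( ⟪v,u⟫/δ , u + (⟪v,u⟫/(δ(δ+1))) • v ), one has π_T( δ⁻¹ • (1, v) + ξ_v(u) ) = ( 0 , (1 + ⟪v,u⟫)⁻¹ • ( (1 + ⟪v,u⟫/(1+δ)) • v + δ • u ) ). -/

import Mathlib

open RealInnerProductSpace

variable {E : Type*} [NormedAddCommGroup E] [InnerProductSpace ℝ E]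

/-- The Minkowski bilinear form on `ℝ × E`. -/
noncomputable def minkB (A C : ℝ × E) : ℝ := A.1 * C.1 - ⟪A.2, C.2⟫

/-- The chronor `T = (1, 0)`. -/
noncomputable def chronor : ℝ × E := (1, 0)

/-- The pseudo-projection along the chronor `T`. -/
noncomputable def pseudoProj (A : ℝ × E) : ℝ × E :=
  (minkB A (chronor : ℝ × E))⁻¹ • A - chronor

/-- The rotation of the private space of `T = (1,0)` to the private space of the
observer moving with velocity `v`; here `δ = √(1 - ‖v‖²)`. -/
noncomputable def xiMap (v : E) (a : E) : ℝ × E :=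
  (⟪v, a⟫ / Real.sqrt (1 - ‖v‖ ^ 2),
    a + (⟪v, a⟫ / (Real.sqrt (1 - ‖v‖ ^ 2) * (Real.sqrt (1 - ‖v‖ ^ 2) + 1))) • v)

/-- Explicit Møller addition formula. -/
theorem moller_addition_explicit (u v : E) (hv : ‖v‖ < 1)
    (huv : 1 + ⟪v, u⟫ ≠ 0) :
    pseudoProj ((Real.sqrt (1 - ‖v‖ ^ 2))⁻¹ • (((1 : ℝ), v) : ℝ × E) + xiMap v u) =
      ((0 : ℝ),
        (1 + ⟪v, u⟫)⁻¹ •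
          ((1 + ⟪v, u⟫ / (1 + Real.sqrt (1 - ‖v‖ ^ 2))) • v +
            Real.sqrt (1 - ‖v‖ ^ 2) • u)) := by
  have hδ : (0:ℝ) < Real.sqrt (1 - ‖v‖ ^ 2) :=
    Real.sqrt_pos.mpr (by nlinarith [norm_nonneg v])
  set δ := Real.sqrt (1 - ‖v‖ ^ 2) with hδdef
  have hδ0 : δ ≠ 0 := ne_of_gt hδ
  have hδ1 : δ + 1 ≠ 0 := by positivity
  have h1δ : 1 + δ ≠ 0 := by positivity
  set c := ⟪v, u⟫ with hc
  simp only [pseudoProj, xiMap, minkB, chronor, Prod.smul_mk, Prod.mk_add_mk, Prod.mk_sub_mk,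
    Prod.smul_def, Prod.fst_add, Prod.snd_add, Prod.fst_sub, Prod.snd_sub, smul_eq_mul,
    inner_zero_right, Prod.mk.injEq]
  simp only [← hδdef, ← hc, mul_zero, sub_zero]
  constructor
  · field_simp; norm_num
  · match_scalars <;> (field_simp; try ring)
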